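/- Let G be a complete normed additive commutative group, let p be a positive integer, and let M : G → [0, ∞] be a functional satisfying, for all x, y ∈ G: M(x + y) ≤ M(x) + M(y); M(−x) = M(x); ‖x‖ ≤ M(x) (as extended nonnegative reals); and M(x) ≤ M(p • x). If T ∈ G and (Q_j)_{j ∈ ℕ} is a sequence in G such that M(T − p • Q_j) → 0 as j → ∞, then there exists Q ∈ G with T = p • Q. In particular, the subgroup {p • Q : Q ∈ G} is closed with respect to convergence in M. -/

import Mathlib

open Filter

/-- Abstract closedness of the subgroup `{p • Q}` with respect to convergence in a
mass-like functional `M` on a complete normed abelian group: if `M` is subadditive,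
symmetric, dominates the norm, and satisfies `M(x) ≤ M(p • x)`, and if
`M(T − p • Q_j) → 0`, then `T = p • Q` for some `Q`. -/
theorem statement4 {G : Type*} [NormedAddCommGroup G] [CompleteSpace G]
    (p : ℕ) (hp : 0 < p) (M : G → ENNReal)
    (hsub : ∀ x y : G, M (x + y) ≤ M x + M y)
    (hsymm : ∀ x : G, M (-x) = M x)
    (hnorm : ∀ x : G, (‖x‖₊ : ENNReal) ≤ M x)
    (hmul : ∀ x : G, M x ≤ M (p • x))
    (T : G) (Q : ℕ → G)
    (hconv : Tendsto (fun j : ℕ => M (T - p • Q j)) atTop (nhds 0)) :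
    ∃ Q' : G, T = p • Q' := by
  have key : ∀ j k : ℕ, edist (Q j) (Q k) ≤ M (T - p • Q j) + M (T - p • Q k) := by
    intro j k
    calc edist (Q j) (Q k) = (‖Q j - Q k‖₊ : ENNReal) := (edist_eq_enorm_sub _ _).trans (enorm_eq_nnnorm _)
      _ ≤ M (Q j - Q k) := hnorm _
      _ ≤ M (p • (Q j - Q k)) := hmul _
      _ = M ((T - p • Q k) + -(T - p • Q j)) := by rw [smul_sub]; congr 1; abel
      _ ≤ M (T - p • Q k) + M (-(T - p • Q j)) := hsub _ _
      _ = M (T - p • Q j) + M (T - p • Q k) := by rw [hsymm]; exact add_comm _ _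
  have hcauchy : CauchySeq Q := by
    rw [EMetric.cauchySeq_iff]
    intro ε hε
    obtain ⟨N, hN⟩ := eventually_atTop.mp
      (hconv.eventually_lt_const (ENNReal.half_pos hε.ne'))
    refine ⟨N, fun j hj k hk => ?_⟩
    calc edist (Q j) (Q k) ≤ M (T - p • Q j) + M (T - p • Q k) := key j k
      _ < ε / 2 + ε / 2 := ENNReal.add_lt_add (hN j hj) (hN k hk)
      _ = ε := ENNReal.add_halves ε
  obtain ⟨L, hL⟩ := cauchySeq_tendsto_of_complete hcauchy
  have h1 : Tendsto (fun j => p • Q j) atTop (nhds (p • L)) := hL.const_smul p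
  have h2 : Tendsto (fun j => p • Q j) atTop (nhds T) := by
    rw [tendsto_iff_edist_tendsto_0]
    refine tendsto_of_tendsto_of_tendsto_of_le_of_le tendsto_const_nhds hconv
      (fun j => zero_le) (fun j => ?_)
    calc edist (p • Q j) T = (‖T - p • Q j‖₊ : ENNReal) := by
          rw [edist_comm]; exact (edist_eq_enorm_sub _ _).trans (enorm_eq_nnnorm _)
      _ ≤ M (T - p • Q j) := hnorm _
  exact ⟨L, tendsto_nhds_unique h2 h1⟩
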